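/- exp(x − x²/6) ≤ 1 + x + x²/3 for all real x; consequently, for a martingale difference X with E X = 0 and E X² < ∞, E exp{λX − (λ²/6)X²} ≤ exp{(λ²/3)E X²} for all λ ∈ ℝ. -/

import Mathlib

open MeasureTheory

private noncomputable def delyonF : ℝ → ℝ :=
  fun x => (1 + x + x ^ 2 / 3) * Real.exp (-x + x ^ 2 / 6)

private lemma delyonF_hasDerivAt (x : ℝ) :
    HasDerivAt delyonF (x ^ 3 / 9 * Real.exp (-x + x ^ 2 / 6)) x := by
  have hP : HasDerivAt (fun x : ℝ => 1 + x + x ^ 2 / 3) (1 + 2 * x / 3) x := by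
    have h := ((hasDerivAt_id x).const_add (1 : ℝ)).fun_add ((hasDerivAt_pow 2 x).div_const 3)
    refine h.congr_deriv ?_
    push_cast
    ring
  have hQ : HasDerivAt (fun x : ℝ => -x + x ^ 2 / 6) (-1 + 2 * x / 6) x := by
    have h1 : HasDerivAt (fun x : ℝ => -x) (-1) x := (hasDerivAt_id x).neg
    have h2 := (hasDerivAt_pow 2 x).div_const 6
    simpa using h1.fun_add h2
  have hE : HasDerivAt (fun x : ℝ => Real.exp (-x + x ^ 2 / 6))
      (Real.exp (-x + x ^ 2 / 6) * (-1 + 2 * x / 6)) x := hQ.exp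
  have := hP.fun_mul hE
  refine this.congr_deriv ?_
  ring

private lemma delyonF_one_le (x : ℝ) : 1 ≤ delyonF x := by
  have hdiff : Differentiable ℝ delyonF := fun y => (delyonF_hasDerivAt y).differentiableAt
  have hderiv : ∀ y, deriv delyonF y = y ^ 3 / 9 * Real.exp (-y + y ^ 2 / 6) :=
    fun y => (delyonF_hasDerivAt y).deriv
  have hF0 : delyonF 0 = 1 := by simp [delyonF]
  rcases le_or_gt 0 x with hx | hx
  · have hmono : MonotoneOn delyonF (Set.Ici (0 : ℝ)) := by
      apply monotoneOn_of_deriv_nonneg (convex_Ici 0) hdiff.continuous.continuousOn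
        hdiff.differentiableOn
      intro y hy
      rw [interior_Ici] at hy
      rw [hderiv]
      have hy0 : (0:ℝ) ≤ y := le_of_lt (Set.mem_Ioi.mp hy)
      have : (0:ℝ) ≤ y ^ 3 / 9 := by positivity
      exact mul_nonneg this (Real.exp_pos _).le
    have := hmono (Set.self_mem_Ici) hx hx
    rwa [hF0] at this
  · have hanti : AntitoneOn delyonF (Set.Iic (0 : ℝ)) := by
      apply antitoneOn_of_deriv_nonpos (convex_Iic 0) hdiff.continuous.continuousOn
        hdiff.differentiableOn
      intro y hy
      rw [interior_Iic] at hy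
      rw [hderiv]
      have hy3 : y ^ 3 ≤ 0 := by nlinarith [Set.mem_Iio.mp hy, sq_nonneg y]
      have := Real.exp_pos (-y + y ^ 2 / 6)
      nlinarith
    have := hanti hx.le Set.self_mem_Iic hx.le
    rwa [hF0] at this

private lemma delyon_pointwise (x : ℝ) :
    Real.exp (x - x ^ 2 / 6) ≤ 1 + x + x ^ 2 / 3 := by
  have h := delyonF_one_le x
  have hmul : Real.exp (x - x ^ 2 / 6) * Real.exp (-x + x ^ 2 / 6) = 1 := by
    rw [← Real.exp_add]; ring_nf; exact Real.exp_zero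
  have hpos := Real.exp_pos (x - x ^ 2 / 6)
  have hpos2 := Real.exp_pos (-x + x ^ 2 / 6)
  unfold delyonF at h
  nlinarith

/-- Delyon's inequality: `exp(x − x²/6) ≤ 1 + x + x²/3` for all real `x`;
consequently, for a mean-zero square-integrable random variable `X`,
`E exp(λX − (λ²/6)X²) ≤ exp((λ²/3) E X²)` for all `λ ∈ ℝ`. -/
theorem delyon_inequality :
    (∀ x : ℝ, Real.exp (x - x ^ 2 / 6) ≤ 1 + x + x ^ 2 / 3) ∧
    (∀ {Ω : Type} {mΩ : MeasurableSpace Ω} (μ : Measure Ω) [IsProbabilityMeasure μ]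
      (X : Ω → ℝ), Measurable X → Integrable X μ →
      Integrable (fun ω => X ω ^ 2) μ → (∫ ω, X ω ∂μ) = 0 →
      ∀ lam : ℝ,
        (∫ ω, Real.exp (lam * X ω - lam ^ 2 / 6 * X ω ^ 2) ∂μ)
          ≤ Real.exp (lam ^ 2 / 3 * ∫ ω, X ω ^ 2 ∂μ)) := by
  refine ⟨delyon_pointwise, ?_⟩
  intro Ω mΩ μ _ X hXm hX1 hX2 hmean lam
  set f : Ω → ℝ := fun ω => Real.exp (lam * X ω - lam ^ 2 / 6 * X ω ^ 2) with hf
  set g : Ω → ℝ := fun ω => 1 + lam * X ω + lam ^ 2 / 3 * X ω ^ 2 with hg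
  have hfg : ∀ ω, f ω ≤ g ω := by
    intro ω
    have := delyon_pointwise (lam * X ω)
    simp only [hf, hg]
    calc Real.exp (lam * X ω - lam ^ 2 / 6 * X ω ^ 2)
        = Real.exp (lam * X ω - (lam * X ω) ^ 2 / 6) := by ring_nf
      _ ≤ 1 + lam * X ω + (lam * X ω) ^ 2 / 3 := this
      _ = 1 + lam * X ω + lam ^ 2 / 3 * X ω ^ 2 := by ring
  have hgint : Integrable g μ :=
    ((integrable_const (1 : ℝ)).add (hX1.const_mul lam)).add (hX2.const_mul (lam ^ 2 / 3))
  have hfm : Measurable f := by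
    apply Measurable.exp
    exact (hXm.const_mul lam).sub ((hXm.pow_const 2).const_mul (lam ^ 2 / 6))
  have hfint : Integrable f μ := by
    refine hgint.mono' hfm.aestronglyMeasurable ?_
    filter_upwards with ω
    rw [Real.norm_eq_abs, abs_of_pos (Real.exp_pos _)]
    exact hfg ω
  have h1 : (∫ ω, f ω ∂μ) ≤ ∫ ω, g ω ∂μ := integral_mono hfint hgint hfg
  have i1 : Integrable (fun ω : Ω => 1 + lam * X ω) μ :=
    (integrable_const 1).add (hX1.const_mul lam)
  have i2 : Integrable (fun ω : Ω => lam ^ 2 / 3 * X ω ^ 2) μ := hX2.const_mul _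
  have h2 : (∫ ω, g ω ∂μ) = 1 + lam ^ 2 / 3 * ∫ ω, X ω ^ 2 ∂μ := by
    rw [hg]
    simp only []
    rw [integral_add i1 i2, integral_add (integrable_const (1 : ℝ)) (hX1.const_mul lam),
      integral_const, integral_const_mul, integral_const_mul, hmean]
    simp
  have h3 : 1 + lam ^ 2 / 3 * ∫ ω, X ω ^ 2 ∂μ ≤ Real.exp (lam ^ 2 / 3 * ∫ ω, X ω ^ 2 ∂μ) := by
    have := Real.add_one_le_exp (lam ^ 2 / 3 * ∫ ω, X ω ^ 2 ∂μ)
    linarith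
  calc (∫ ω, f ω ∂μ) ≤ ∫ ω, g ω ∂μ := h1
    _ = 1 + lam ^ 2 / 3 * ∫ ω, X ω ^ 2 ∂μ := h2
    _ ≤ _ := h3
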